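/- Every graph with acyclic chromatic number at most k has push chromatic number at most k·2^{k−2}: every orientation of such a graph can be pushed to admit a homomorphism to an oriented graph on k·2^{k−2} vertices (the half of the Zielonka graph Z_k induced on vectors of coordinate sum at least ⌈k/2⌉). -/

import Mathlib

/-- An oriented graph: a loopless digraph with no 2-cycles (arc relation is asymmetric). -/
structure OGraph (V : Type) where
  arc : V → V → Prop
  asymm : ∀ u v, arc u v → ¬ arc v u

namespace OGraph

/-- Pushing a set `S` of vertices reverses exactly the arcs with exactly one endpoint in `S`. -/
def push {V : Type} (G : OGraph V) (S : Set V) : OGraph V where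
  arc u v := (Xor' (u ∈ S) (v ∈ S) ∧ G.arc v u) ∨ (¬ Xor' (u ∈ S) (v ∈ S) ∧ G.arc u v)
  asymm := by
    intro u v h h'
    have h1 := G.asymm u v
    have h2 := G.asymm v u
    unfold Xor' at h h'
    by_cases ha : u ∈ S <;> by_cases hb : v ∈ S <;> simp [ha, hb] at h h' <;> tauto

/-- Homomorphism of oriented graphs. -/
def IsHom {V W : Type} (G : OGraph V) (H : OGraph W) (f : V → W) : Prop :=
  ∀ u v, G.arc u v → H.arc (f u) (f v)

/-- Isomorphism of oriented graphs along an equivalence. -/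
def IsIso {V W : Type} (G : OGraph V) (H : OGraph W) (e : V ≃ W) : Prop :=
  ∀ u v, G.arc u v ↔ H.arc (e u) (e v)

/-- The anti-twinned graph `R(G)` on two copies of the vertices:
`inl` is the original copy, `inr` the pushed (primed) copy. -/
def antiTwin {V : Type} (G : OGraph V) : OGraph (V ⊕ V) where
  arc x y :=
    match x, y with
    | Sum.inl u, Sum.inl v => G.arc u v
    | Sum.inr u, Sum.inr v => G.arc u v
    | Sum.inl u, Sum.inr v => G.arc v u
    | Sum.inr u, Sum.inl v => G.arc v u
  asymm := by
    rintro (u | u) (v | v) h h' <;> exact G.asymm _ _ h h'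

/-- The anti-twin of a vertex of `R(G)`: `x'` with `x'' = x`. -/
def tw {V : Type} : V ⊕ V → V ⊕ V := Sum.elim Sum.inr Sum.inl

/-- `H` is an orientation of the simple graph `G`. -/
def IsOrientationOf {V : Type} (H : OGraph V) (G : SimpleGraph V) : Prop :=
  (∀ u v, H.arc u v → G.Adj u v) ∧ (∀ u v, G.Adj u v → H.arc u v ∨ H.arc v u)

end OGraph

/-- The directed 3-cycle. -/
def C3 : OGraph (Fin 3) where
  arc u v := v = u + 1
  asymm := by decide

/-- An acyclic `k`-coloring: a proper coloring in which the union of any two color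
classes induces a forest. -/
def IsAcyclicColoring {V : Type} (G : SimpleGraph V) {k : ℕ} (c : V → Fin k) : Prop :=
  (∀ u v, G.Adj u v → c u ≠ c v) ∧
  ∀ i j : Fin k, (G.induce {v | c v = i ∨ c v = j}).IsAcyclic


section Aux

private lemma bool_aux1 : ∀ x y p q D : Bool,
    xor y x = !D → xor p q = true → xor (xor x p) (xor y q) = D := by decide

private lemma bool_aux2 : ∀ x y p q D : Bool,
    xor x y = D → xor p q = false → xor (xor x p) (xor y q) = D := by decide

private lemma bool_xor_cancel (s x y : Bool) : xor (xor s x) (xor s y) = xor x y := by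
  cases s <;> cases x <;> cases y <;> rfl

lemma exists_potential {V : Type} [Finite V] :
    ∀ n : ℕ, ∀ G : SimpleGraph V, G.edgeSet.ncard ≤ n → G.IsAcyclic →
      ∀ w : V → V → Bool, (∀ u v, G.Adj u v → w u v = w v u) →
      ∃ t : V → Bool, ∀ u v, G.Adj u v → xor (t u) (t v) = w u v := by
  classical
  intro n
  induction n with
  | zero =>
    intro G hcard hA w _
    refine ⟨fun _ => false, fun u v huv => ?_⟩
    have h0 : G.edgeSet = ∅ := by
      rw [← Set.ncard_eq_zero (Set.toFinite _)]; omega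
    exact absurd (G.mem_edgeSet.2 huv) (by simp [h0])
  | succ n ih =>
    intro G hcard hA w hw
    by_cases hE : ∀ u v : V, ¬ G.Adj u v
    · exact ⟨fun _ => false, fun u v huv => absurd huv (hE u v)⟩
    push_neg at hE
    obtain ⟨a, b, hab⟩ := hE
    set G' := G.deleteEdges {s(a,b)} with hG'
    have hle : G' ≤ G := SimpleGraph.deleteEdges_le _
    have hA' : G'.IsAcyclic := fun v c hc => hA (c.mapLe hle) (hc.mapLe hle)
    have hcard' : G'.edgeSet.ncard ≤ n := by
      rw [hG', SimpleGraph.edgeSet_deleteEdges]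
      have := Set.ncard_diff_singleton_lt_of_mem (G.mem_edgeSet.2 hab) (Set.toFinite _)
      have h2 : (G.edgeSet \ {s(a,b)}).ncard = (G.edgeSet \ ({s(a,b)} : Set (Sym2 V))).ncard := rfl
      omega
    obtain ⟨t', ht'⟩ := ih G' hcard' hA' w (fun u v huv => hw u v (hle huv))
    have hnr : ¬ G'.Reachable b a := by
      rintro ⟨q⟩
      set p := q.toPath with hp
      have hpath : (p.1.mapLe hle).IsPath := (SimpleGraph.Walk.mapLe_isPath hle).2 p.2
      have hcyc : (SimpleGraph.Walk.cons hab (p.1.mapLe hle)).IsCycle := by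
        rw [SimpleGraph.Walk.cons_isCycle_iff]
        refine ⟨hpath, fun hmem => ?_⟩
        have hed : (p.1.mapLe hle).edges = p.1.edges := by
          have hid : ⇑(SimpleGraph.Hom.ofLE hle) = id := rfl
          simp [SimpleGraph.Walk.mapLe, SimpleGraph.Walk.edges_map, hid, Sym2.map_id,
            List.map_id]
        rw [hed] at hmem
        have := p.1.edges_subset_edgeSet hmem
        rw [hG', SimpleGraph.edgeSet_deleteEdges] at this
        exact this.2 rfl
      exact hA _ hcyc
    set s0 : Bool := xor (t' a) (xor (t' b) (w a b)) with hs0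
    refine ⟨fun v => if G'.Reachable b v then xor s0 (t' v) else t' v, ?_⟩
    intro u v huv
    by_cases h1 : s(u,v) = s(a,b)
    · rcases Sym2.eq_iff.1 h1 with ⟨rfl, rfl⟩ | ⟨rfl, rfl⟩
      · dsimp only
        rw [if_neg hnr, if_pos (SimpleGraph.Reachable.refl v)]
        cases hx : t' u <;> cases hy : t' v <;> cases hz : w u v <;>
          simp [hs0, hx, hy, hz]
      · dsimp only
        rw [if_pos (SimpleGraph.Reachable.refl u), if_neg hnr]
        have hsym : w u v = w v u := hw u v huv
        cases hx : t' u <;> cases hy : t' v <;> cases hz : w v u <;>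
          simp [hs0, hx, hy, hz, hsym]
    · have huv' : G'.Adj u v := by
        rw [hG', SimpleGraph.deleteEdges_adj]
        exact ⟨huv, by simpa using h1⟩
      have hiff : G'.Reachable b u ↔ G'.Reachable b v :=
        ⟨fun h => h.trans huv'.reachable, fun h => h.trans huv'.symm.reachable⟩
      by_cases hr : G'.Reachable b u
      · dsimp only
        rw [if_pos hr, if_pos (hiff.1 hr), bool_xor_cancel]
        exact ht' u v huv'
      · dsimp only
        rw [if_neg hr, if_neg (fun h => hr (hiff.2 h))]
        exact ht' u v huv'

lemma card_two_fixed {k : ℕ} (i j : Fin k) (hij : i ≠ j) :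
    Fintype.card {α : Fin k → Bool // α i = false ∧ α j = false} = 2 ^ (k - 2) := by
  classical
  have e : {α : Fin k → Bool // α i = false ∧ α j = false} ≃
      ({x : Fin k // ¬(x = i ∨ x = j)} → Bool) :=
  { toFun := fun α x => α.1 x.1
    invFun := fun γ => ⟨fun x => if h : x = i ∨ x = j then false else γ ⟨x, h⟩,
      by simp, by simp⟩
    left_inv := fun α => by
      apply Subtype.ext
      funext x
      by_cases h : x = i ∨ x = j
      · rcases h with rfl | rfl
        · simp [α.2.1]
        · simp [α.2.2]
      · simp [h]
    right_inv := fun γ => by funext x; exact dif_neg x.2 }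
  rw [Fintype.card_congr e, Fintype.card_fun, Fintype.card_bool]
  congr 1
  have e2 : Bool ≃ {x : Fin k // x = i ∨ x = j} :=
  { toFun := fun b => if b then ⟨i, Or.inl rfl⟩ else ⟨j, Or.inr rfl⟩
    invFun := fun x => decide (x.1 = i)
    left_inv := fun b => by cases b <;> simp [hij.symm]
    right_inv := fun x => by
      rcases x.2 with h | h
      · simp [Subtype.ext_iff, h]
      · have hne : x.1 ≠ i := by rw [h]; exact fun hc => hij hc.symm
        simp [Subtype.ext_iff, hne, h, hij.symm] }
  have h2 : Fintype.card {x : Fin k // x = i ∨ x = j} = 2 := by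
    rw [← Fintype.card_congr e2, Fintype.card_bool]
  rw [Fintype.card_subtype_compl, h2, Fintype.card_fin]

end Aux

/-- Every graph with acyclic chromatic number at most `k` has push
chromatic number at most `k·2^{k-2}`: every orientation of such a graph can be pushed to
admit a homomorphism to some oriented graph on `k·2^{k-2}` vertices. -/
theorem acyclic_chromatic_bounds_push_chromatic {V : Type} [Fintype V]
    (Gr : SimpleGraph V) (k : ℕ) (hc : ∃ c : V → Fin k, IsAcyclicColoring Gr c)
    (H : OGraph V) (hH : OGraph.IsOrientationOf H Gr) :
    ∃ (W : Type) (inst : Fintype W) (K : OGraph W),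
      @Fintype.card W inst = k * 2 ^ (k - 2) ∧
      ∃ (S : Set V) (f : V → W), OGraph.IsHom (H.push S) K f := by
  classical
  obtain ⟨c, hcp, hcf⟩ := hc
  rcases Nat.lt_or_ge k 2 with hk | hk
  · -- degenerate cases k = 0, 1
    interval_cases k
    · refine ⟨Fin 0, inferInstance, ⟨fun _ _ => False, fun _ _ h => h.elim⟩, by simp, ∅,
        fun v => (c v).elim0, fun u v _ => (c u).elim0⟩
    · refine ⟨Fin 1, inferInstance, ⟨fun _ _ => False, fun _ _ h => h.elim⟩, by simp, ∅,
        fun _ => 0, fun u v h => ?_⟩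
      have hadj : Gr.Adj u v := by
        rcases h with ⟨_, h⟩ | ⟨_, h⟩
        · exact (hH.1 v u h).symm
        · exact hH.1 u v h
      exact absurd (Subsingleton.elim (c u) (c v)) (hcp u v hadj)
  -- main case : k ≥ 2
  have hk0 : 0 < k := by omega
  have hk1 : 1 < k := by omega
  set j0 : Fin k → Fin k := fun i => if (i : ℕ) = 0 then ⟨1, hk1⟩ else ⟨0, hk0⟩ with hj0def
  have hj0 : ∀ i : Fin k, j0 i ≠ i := by
    intro i h
    apply_fun Fin.val at h
    simp only [hj0def] at h
    split_ifs at h <;> simp_all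
  -- potentials on the two-class forests
  have key : ∀ i j : Fin k, ∃ t : {v : V // c v = i ∨ c v = j} → Bool,
      ∀ u v : {v : V // c v = i ∨ c v = j}, Gr.Adj u.1 v.1 →
        xor (t u) (t v) =
          (if H.arc u.1 v.1 then decide ((c u.1 : Fin k) < c v.1)
            else decide ((c v.1 : Fin k) < c u.1)) := by
    intro i j
    have hac : (Gr.induce {v | c v = i ∨ c v = j}).IsAcyclic := hcf i j
    obtain ⟨t, ht⟩ := exists_potential ((Gr.induce {v | c v = i ∨ c v = j}).edgeSet.ncard)
      (Gr.induce {v | c v = i ∨ c v = j}) le_rfl hac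
      (fun x y => if H.arc x.1 y.1 then decide ((c x.1 : Fin k) < c y.1)
        else decide ((c y.1 : Fin k) < c x.1))
      (by
        intro u v huv
        have hadj : Gr.Adj u.1 v.1 := huv
        rcases hH.2 _ _ hadj with h | h
        · rw [if_pos h, if_neg (H.asymm _ _ h)]
        · rw [if_neg (H.asymm _ _ h), if_pos h])
    exact ⟨t, fun u v huv => ht u v huv⟩
  choose T hT using key
  -- the global bit functions
  set b : V → Fin k → Bool := fun v j =>
    if (c v : Fin k) ≤ j then T (c v) j ⟨v, Or.inl rfl⟩ else T j (c v) ⟨v, Or.inr rfl⟩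
    with hbdef
  have hb : ∀ u v : V, H.arc u v → xor (b u (c v)) (b v (c u)) = decide ((c u : Fin k) < c v) := by
    intro u v ha
    have hadj : Gr.Adj u v := hH.1 u v ha
    have hne : c u ≠ c v := hcp u v hadj
    rcases lt_or_gt_of_ne hne with hlt | hlt
    · have h1 : (c u : Fin k) ≤ c v := le_of_lt hlt
      have h2 : ¬ ((c v : Fin k) ≤ c u) := not_le.2 hlt
      simp only [hbdef, if_pos h1, if_neg h2]
      have := hT (c u) (c v) ⟨u, Or.inl rfl⟩ ⟨v, Or.inr rfl⟩ hadj
      rw [if_pos ha] at this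
      exact this
    · have h1 : ¬ ((c u : Fin k) ≤ c v) := not_le.2 hlt
      have h2 : (c v : Fin k) ≤ c u := le_of_lt hlt
      simp only [hbdef, if_neg h1, if_pos h2]
      have := hT (c v) (c u) ⟨u, Or.inr rfl⟩ ⟨v, Or.inl rfl⟩ hadj
      rw [if_pos ha] at this
      exact this
  set sb : V → Bool := fun v => b v (j0 (c v)) with hsbdef
  set S : Set V := {v | sb v = true} with hSdef
  set B : V → Fin k → Bool := fun v j => if j = c v then false else xor (b v j) (sb v)
    with hBdef
  have hB1 : ∀ v, B v (c v) = false := fun v => if_pos rfl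
  have hB2 : ∀ v, B v (j0 (c v)) = false := by
    intro v
    simp only [hBdef, if_neg (hj0 (c v)), hsbdef, Bool.xor_self]
  -- target graph
  refine ⟨Σ i : Fin k, {α : Fin k → Bool // α i = false ∧ α (j0 i) = false}, inferInstance,
    { arc := fun x y => x.1 ≠ y.1 ∧ xor (x.2.1 y.1) (y.2.1 x.1) = decide ((x.1 : Fin k) < y.1)
      asymm := by
        rintro x y ⟨hxy, h1⟩ ⟨_, h2⟩
        rw [Bool.xor_comm, h1] at h2
        have : ((x.1 : Fin k) < y.1) ↔ ((y.1 : Fin k) < x.1) := by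
          exact decide_eq_decide.1 h2
        rcases lt_trichotomy x.1 y.1 with h | h | h
        · exact absurd (this.1 h) (lt_asymm h)
        · exact hxy h
        · exact absurd (this.2 h) (lt_asymm h) }, ?_, S,
    fun v => ⟨c v, ⟨B v, hB1 v, hB2 v⟩⟩, ?_⟩
  · -- cardinality
    rw [Fintype.card_sigma]
    have : ∀ i : Fin k, Fintype.card {α : Fin k → Bool // α i = false ∧ α (j0 i) = false}
        = 2 ^ (k - 2) := fun i => card_two_fixed i (j0 i) (fun h => hj0 i h.symm)
    simp [this, Finset.sum_const, Finset.card_univ, mul_comm]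
  · -- homomorphism
    rintro u v (⟨hx, ha⟩ | ⟨hx, ha⟩)
    · have hadj : Gr.Adj u v := (hH.1 v u ha).symm
      have hne : c u ≠ c v := hcp u v hadj
      refine ⟨hne, ?_⟩
      have h1 : xor (b v (c u)) (b u (c v)) = decide ((c v : Fin k) < c u) := hb v u ha
      have hd : decide ((c v : Fin k) < c u) = !decide ((c u : Fin k) < c v) := by
        have hiff : ((c v : Fin k) < c u) ↔ ¬ ((c u : Fin k) < c v) :=
          ⟨fun h h' => lt_asymm h h', fun h' => (lt_or_gt_of_ne hne).resolve_left h'⟩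
        rw [decide_eq_decide.mpr hiff, decide_not]
      rw [hd] at h1
      have hxs : xor (sb u) (sb v) = true := by
        have hx' : (sb u = true ∧ ¬ sb v = true) ∨ (sb v = true ∧ ¬ sb u = true) := hx
        generalize sb u = p at hx' ⊢
        generalize sb v = q at hx' ⊢
        cases p <;> cases q <;> simp at hx' ⊢
      have hBu : B u (c v) = xor (b u (c v)) (sb u) := if_neg (fun h => hne h.symm)
      have hBv : B v (c u) = xor (b v (c u)) (sb v) := if_neg hne
      show xor (B u (c v)) (B v (c u)) = decide ((c u : Fin k) < c v)
      rw [hBu, hBv]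
      exact bool_aux1 _ _ _ _ _ h1 hxs
    · have hadj : Gr.Adj u v := hH.1 u v ha
      have hne : c u ≠ c v := hcp u v hadj
      refine ⟨hne, ?_⟩
      have h1 := hb u v ha
      have hxs : xor (sb u) (sb v) = false := by
        have hx' : ¬ ((sb u = true ∧ ¬ sb v = true) ∨ (sb v = true ∧ ¬ sb u = true)) := hx
        generalize sb u = p at hx' ⊢
        generalize sb v = q at hx' ⊢
        cases p <;> cases q <;> simp at hx' ⊢
      have hBu : B u (c v) = xor (b u (c v)) (sb u) := if_neg (fun h => hne h.symm)
      have hBv : B v (c u) = xor (b v (c u)) (sb v) := if_neg hne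
      show xor (B u (c v)) (B v (c u)) = decide ((c u : Fin k) < c v)
      rw [hBu, hBv]
      exact bool_aux2 _ _ _ _ _ h1 hxs
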